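/- Every entry of the projection p_(n) = Σ_{k=1}^{n+1} |φ_k⟩⟨φ_k| ∈ Mat_{4^n}(A(S^7_{θ'})) is invariant under the SU(2)-action α_w, i.e. lies in the fixed-point subalgebra A(S^4_θ) = Inv_{SU(2)}(A(S^7_{θ'})). -/

import Mathlib

noncomputable section

/-- The deformation matrix λ'^{ij} of the sphere S^7_{θ'}: λ'^{12}=λ'^{34}=1 and
λ'^{13}=λ'^{14}=λ'^{23}=λ'^{24}=μ (indices 0-based), with λ'^{ji} = (λ'^{ij})⁻¹. -/
def lam7 (μ : ℂ) (i j : Fin 4) : ℂ :=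
  if ((i : ℕ) < 2 ∧ (j : ℕ) < 2) ∨ (2 ≤ (i : ℕ) ∧ 2 ≤ (j : ℕ)) then 1
  else if (i : ℕ) < 2 then μ else μ⁻¹

variable {A : Type} [Ring A] [Algebra ℂ A] [StarRing A] [StarModule ℂ A]

/-- The defining relations of A(S^7_{θ'}): commutation relations among the generators and
their adjoints, and the sphere relation Σ_i z^i z̄^i = 1. -/
def S7Rel (μ : ℂ) (z : Fin 4 → A) : Prop :=
  (∀ i j, z i * z j = lam7 μ i j • (z j * z i)) ∧
  (∀ i j, star (z i) * z j = lam7 μ j i • (z j * star (z i))) ∧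
  (∀ i j, star (z i) * star (z j) = lam7 μ i j • (star (z j) * star (z i))) ∧
  (∑ i, z i * star (z i)) = 1

/-- α = 2(z^1 z̄^3 + z^2 z̄^4). -/
def elA (z : Fin 4 → A) : A := 2 * (z 0 * star (z 2) + z 1 * star (z 3))

/-- β = 2(−z^1 z^4 + z^2 z^3). -/
def elB (z : Fin 4 → A) : A := 2 * (-(z 0 * z 3) + z 1 * z 2)

/-- x = z^1 z̄^1 + z^2 z̄^2 − z^3 z̄^3 − z^4 z̄^4. -/
def elX (z : Fin 4 → A) : A :=
  z 0 * star (z 0) + z 1 * star (z 1) - z 2 * star (z 2) - z 3 * star (z 3)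

/-- |ψ_1⟩ = (z^1, −z̄^2, z^3, −z̄^4)^t. -/
def psi1 (z : Fin 4 → A) : Fin 4 → A := ![z 0, -star (z 1), z 2, -star (z 3)]

/-- |ψ_2⟩ = (z^2, z̄^1, z^4, z̄^3)^t. -/
def psi2 (z : Fin 4 → A) : Fin 4 → A := ![z 1, star (z 0), z 3, star (z 2)]

/-- The projection p = |ψ_1⟩⟨ψ_1| + |ψ_2⟩⟨ψ_2| as a 4×4 matrix. -/
def projP (z : Fin 4 → A) : Matrix (Fin 4) (Fin 4) A :=
  fun i j => psi1 z i * star (psi1 z j) + psi2 z i * star (psi2 z j)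

/-- The normalized symmetrized vector |φ_k⟩ = a_k⁻¹ |ψ_1⟩^{⊗(n−k+1)} ⊗_S |ψ_2⟩^{⊗(k−1)}
(k-1 factors of ψ_2, here k : Fin (n+1) is the number of ψ_2 factors), a_k² = binom(n,k−1),
as an element of A^{4^n} with 4^n indexed by multi-indices Fin n → Fin 4. -/
def phiVec (z : Fin 4 → A) (n : ℕ) (k : Fin (n + 1)) (m : Fin n → Fin 4) : A :=
  (((Real.sqrt (n.choose (k : ℕ)))⁻¹ : ℝ) : ℂ) •
    ∑ S ∈ Finset.powersetCard (k : ℕ) (Finset.univ : Finset (Fin n)),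
      ((List.finRange n).map (fun j => if j ∈ S then psi2 z (m j) else psi1 z (m j))).prod

/-- The projection p_(n) = Σ_{k} |φ_k⟩⟨φ_k| ∈ Mat_{4^n}(A(S^7_{θ'})). -/
def projPn (z : Fin 4 → A) (n : ℕ) : Matrix (Fin n → Fin 4) (Fin n → Fin 4) A :=
  fun m m' => ∑ k : Fin (n + 1), phiVec z n k m * star (phiVec z n k m')


/-! ### Auxiliary machinery -/

open Finset

section PermCount

variable {α' : Type*} [Fintype α'] [DecidableEq α']

/-- The number of permutations mapping `S` onto `S'`. -/
lemma perm_fiber_card (S S' : Finset α') :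
    (Finset.univ.filter (fun π : Equiv.Perm α' => S.image π = S')).card =
      if S.card = S'.card then
        Nat.factorial S.card * Nat.factorial (Fintype.card α' - S.card) else 0 := by
  split_ifs with h
  · have cS : Fintype.card {x // x ∈ S} = S.card := Fintype.card_coe S
    have cS' : Fintype.card {x // x ∈ S'} = S.card := by rw [Fintype.card_coe, h]
    have cC : Fintype.card {x // ¬ x ∈ S} = Fintype.card α' - S.card := by
      rw [Fintype.card_subtype_compl, Fintype.card_coe]
    have cC' : Fintype.card {x // ¬ x ∈ S'} = Fintype.card α' - S.card := by
      rw [Fintype.card_subtype_compl, Fintype.card_coe, h]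
    have e0 : {x // x ∈ S} ≃ {x // x ∈ S'} := Fintype.equivOfCardEq (by rw [cS, cS'])
    have e0' : {x // ¬ x ∈ S} ≃ {x // ¬ x ∈ S'} := Fintype.equivOfCardEq (by rw [cC, cC'])
    have cardE : Fintype.card (({x // x ∈ S} ≃ {x // x ∈ S'}) × ({x // ¬ x ∈ S} ≃ {x // ¬ x ∈ S'}))
        = Nat.factorial S.card * Nat.factorial (Fintype.card α' - S.card) := by
      rw [Fintype.card_prod, Fintype.card_equiv e0, Fintype.card_equiv e0', cS, cC]
    rw [← cardE, ← Finset.card_univ]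
    have key : ∀ π : Equiv.Perm α', S.image π = S' → ∀ a, a ∈ S ↔ π a ∈ S' := by
      intro π hπ a
      constructor
      · intro ha; rw [← hπ]; exact Finset.mem_image_of_mem π ha
      · intro ha; rw [← hπ] at ha
        obtain ⟨b, hb, hba⟩ := Finset.mem_image.1 ha
        rwa [← π.injective hba]
    have keyval : ∀ (e₁ : {x // x ∈ S} ≃ {x // x ∈ S'}) (e₂ : {x // ¬ x ∈ S} ≃ {x // ¬ x ∈ S'}),
        (∀ (a : α') (ha : a ∈ S),
          ((Equiv.sumCompl (· ∈ S)).symm.trans ((e₁.sumCongr e₂).trans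
            (Equiv.sumCompl (· ∈ S')))) a = (e₁ ⟨a, ha⟩ : α')) ∧
        (∀ (a : α') (ha : ¬ a ∈ S),
          ((Equiv.sumCompl (· ∈ S)).symm.trans ((e₁.sumCongr e₂).trans
            (Equiv.sumCompl (· ∈ S')))) a = (e₂ ⟨a, ha⟩ : α')) := by
      intro e₁ e₂
      constructor
      · intro a ha
        simp [Equiv.trans_apply, Equiv.sumCompl_symm_apply_of_pos ha]
      · intro a ha
        simp [Equiv.trans_apply, Equiv.sumCompl_symm_apply_of_neg ha]
    refine Finset.card_bij'
      (i := fun π hπ =>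
        (Equiv.subtypeEquiv π (key π (by simpa using hπ)),
         Equiv.subtypeEquiv π (fun a => not_iff_not.mpr (key π (by simpa using hπ) a))))
      (j := fun e _ =>
        (Equiv.sumCompl (· ∈ S)).symm.trans ((e.1.sumCongr e.2).trans (Equiv.sumCompl (· ∈ S'))))
      ?_ ?_ ?_ ?_
    · intro π hπ; exact Finset.mem_univ _
    · intro e _
      rw [Finset.mem_filter]
      refine ⟨Finset.mem_univ _, ?_⟩
      obtain ⟨h1, h2⟩ := keyval e.1 e.2
      apply Finset.ext
      intro x
      simp only [Finset.mem_image]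
      constructor
      · rintro ⟨a, ha, rfl⟩
        rw [h1 a ha]; exact (e.1 ⟨a, ha⟩).2
      · intro hx
        set π := (Equiv.sumCompl (· ∈ S)).symm.trans ((e.1.sumCongr e.2).trans (Equiv.sumCompl (· ∈ S')))
        refine ⟨π.symm x, ?_, by simp [π]⟩
        by_contra hns
        have := h2 _ hns
        have hx' : π (π.symm x) = x := π.apply_symm_apply x
        rw [this] at hx'
        exact (e.2 ⟨π.symm x, hns⟩).2 (by rw [hx']; exact hx)
    · intro π hπ
      apply Equiv.ext
      intro a
      obtain ⟨h1, h2⟩ := keyval (Equiv.subtypeEquiv π (key π (by simpa using hπ)))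
        (Equiv.subtypeEquiv π (fun a => not_iff_not.mpr (key π (by simpa using hπ) a)))
      by_cases ha : a ∈ S
      · rw [h1 a ha]; rfl
      · rw [h2 a ha]; rfl
    · intro e he
      obtain ⟨h1, h2⟩ := keyval e.1 e.2
      ext a
      · exact congrArg Subtype.val (Subtype.ext (h1 a a.2) : _)
      · exact congrArg Subtype.val (Subtype.ext (h2 a a.2) : _)
  · rw [Finset.card_eq_zero, Finset.filter_eq_empty_iff]
    intro π _ hπ
    exact h (by rw [← hπ, Finset.card_image_of_injective _ π.injective])

end PermCount

section ListLemmas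

variable {ι : Type*} [DecidableEq ι]

/-- Expansion of a product of binomials over a duplicate-free list. -/
lemma list_prod_add (l : List ι) (hl : l.Nodup) (F G : ι → A) :
    (l.map fun j => F j + G j).prod =
      ∑ T ∈ l.toFinset.powerset, (l.map fun j => if j ∈ T then G j else F j).prod := by
  induction l with
  | nil => simp
  | cons a l ih =>
    obtain ⟨hal, hnd⟩ := List.nodup_cons.1 hl
    have hat : a ∉ l.toFinset := by simpa using hal
    rw [List.map_cons, List.prod_cons, ih hnd, List.toFinset_cons,
      Finset.sum_powerset_insert hat, add_mul]
    congr 1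
    · rw [Finset.mul_sum]
      apply Finset.sum_congr rfl
      intro T hT
      rw [List.map_cons, List.prod_cons]
      have haT : a ∉ T := fun h => hat (Finset.mem_powerset.1 hT h)
      rw [if_neg haT]
    · rw [Finset.mul_sum]
      apply Finset.sum_congr rfl
      intro T hT
      rw [List.map_cons, List.prod_cons, if_pos (Finset.mem_insert_self a T)]
      congr 2
      apply List.map_congr_left
      intro j hj
      have hja : j ≠ a := fun h => hal (h ▸ hj)
      simp [Finset.mem_insert, hja]

/-- Scalars pull out of list products. -/
lemma list_prod_smul (l : List ι) (r : ι → ℂ) (x : ι → A) :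
    (l.map fun j => r j • x j).prod = (l.map r).prod • (l.map x).prod := by
  induction l with
  | nil => simp
  | cons a l ih =>
    simp only [List.map_cons, List.prod_cons, ih]
    rw [smul_mul_smul_comm]

end ListLemmas

/-- The coefficient `c(S,T)` of the transformed product. -/
def cf (w₁ w₂ : ℂ) {n : ℕ} (S T : Finset (Fin n)) : ℂ :=
  ∏ j : Fin n, (if j ∈ T then (if j ∈ S then starRingEnd ℂ w₁ else -(starRingEnd ℂ w₂))
    else (if j ∈ S then w₂ else w₁))

/-- e(k,T) = Σ_{|S|=k} c(S,T). -/
def eC (w₁ w₂ : ℂ) {n : ℕ} (k : ℕ) (T : Finset (Fin n)) : ℂ :=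
  ∑ S ∈ Finset.powersetCard k (Finset.univ : Finset (Fin n)), cf w₁ w₂ S T

section Scalar

variable {w₁ w₂ : ℂ} {n : ℕ}

lemma image_iff_forall (π : Equiv.Perm (Fin n)) (T T' : Finset (Fin n)) :
    T.image π = T' ↔ ∀ i, i ∈ T ↔ π i ∈ T' := by
  constructor
  · intro h i
    constructor
    · intro hi; rw [← h]; exact Finset.mem_image_of_mem π hi
    · intro hi; rw [← h] at hi
      obtain ⟨b, hb, hba⟩ := Finset.mem_image.1 hi
      rwa [← π.injective hba]
  · intro h
    apply Finset.ext
    intro x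
    simp only [Finset.mem_image]
    constructor
    · rintro ⟨a, ha, rfl⟩; exact (h a).1 ha
    · intro hx
      exact ⟨π.symm x, (h _).2 (by simpa using hx), by simp⟩

lemma orth_single (hw : Complex.normSq w₁ + Complex.normSq w₂ = 1)
    (π : Equiv.Perm (Fin n)) (T T' : Finset (Fin n)) :
    ∑ S ∈ (Finset.univ : Finset (Fin n)).powerset,
      cf w₁ w₂ S T * starRingEnd ℂ (cf w₁ w₂ (S.image π) T') =
      if T.image π = T' then 1 else 0 := by
  have hC : w₁ * starRingEnd ℂ w₁ + w₂ * starRingEnd ℂ w₂ = 1 := by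
    rw [Complex.mul_conj, Complex.mul_conj]
    exact_mod_cast congrArg (Complex.ofReal) hw
  -- rewrite each summand as a single product over i, with an `if i ∈ S` shape
  have hterm : ∀ S ∈ (Finset.univ : Finset (Fin n)).powerset,
      cf w₁ w₂ S T * starRingEnd ℂ (cf w₁ w₂ (S.image π) T') =
      ∏ i : Fin n, (if i ∈ S then
          ((if i ∈ T then starRingEnd ℂ w₁ else w₂) * (if π i ∈ T' then w₁ else starRingEnd ℂ w₂))
        else
          ((if i ∈ T then -(starRingEnd ℂ w₂) else w₁) *
            (if π i ∈ T' then -w₂ else starRingEnd ℂ w₁))) := by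
    intro S _
    unfold cf
    rw [map_prod, ← Equiv.prod_comp π (fun j => starRingEnd ℂ _), ← Finset.prod_mul_distrib]
    apply Finset.prod_congr rfl
    intro i _
    have hmem : π i ∈ S.image π ↔ i ∈ S := by
      constructor
      · intro h; obtain ⟨b, hb, hba⟩ := Finset.mem_image.1 h; rwa [← π.injective hba]
      · intro h; exact Finset.mem_image_of_mem π h
    by_cases h1 : i ∈ S <;> by_cases h2 : i ∈ T <;> by_cases h3 : π i ∈ T' <;>
      simp [h1, h2, h3, hmem, map_mul, map_neg] <;> ring
  rw [Finset.sum_congr rfl hterm]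
  -- expand the sum over subsets into a product of two-term sums
  have hexp : ∀ (a b : Fin n → ℂ),
      ∑ S ∈ (Finset.univ : Finset (Fin n)).powerset,
        ∏ i : Fin n, (if i ∈ S then a i else b i) = ∏ i : Fin n, (a i + b i) := by
    intro a b
    rw [Finset.prod_add]
    apply Finset.sum_congr rfl
    intro S hS
    rw [Finset.prod_ite (p := fun i => i ∈ S)]
    congr 1
    · apply Finset.prod_congr _ (fun _ _ => rfl)
      ext i; simp
    · apply Finset.prod_congr _ (fun _ _ => rfl)
      ext i; simp [Finset.mem_sdiff]
  rw [hexp]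
  -- each factor is 0 or 1
  have hfac : ∀ i : Fin n,
      ((if i ∈ T then starRingEnd ℂ w₁ else w₂) * (if π i ∈ T' then w₁ else starRingEnd ℂ w₂)) +
      ((if i ∈ T then -(starRingEnd ℂ w₂) else w₁) *
        (if π i ∈ T' then -w₂ else starRingEnd ℂ w₁)) =
      if (i ∈ T ↔ π i ∈ T') then 1 else 0 := by
    intro i
    by_cases h2 : i ∈ T <;> by_cases h3 : π i ∈ T' <;>
      simp [h2, h3] <;> first | ring1 | linear_combination hC
  rw [Finset.prod_congr rfl (fun i _ => hfac i)]
  by_cases h : T.image π = T'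
  · rw [if_pos h]
    apply Finset.prod_eq_one
    intro i _
    rw [if_pos (((image_iff_forall π T T').1 h) i)]
  · rw [if_neg h]
    obtain ⟨i, hi⟩ := not_forall.1 (fun hall => h ((image_iff_forall π T T').2 hall))
    exact Finset.prod_eq_zero (Finset.mem_univ i) (if_neg hi)


lemma key_identity (hw : Complex.normSq w₁ + Complex.normSq w₂ = 1) (T T' : Finset (Fin n)) :
    ∑ k ∈ Finset.range (n + 1),
      ((n.choose k : ℂ))⁻¹ * (eC w₁ w₂ k T * starRingEnd ℂ (eC w₁ w₂ k T')) =
    if T.card = T'.card then ((n.choose T.card : ℂ))⁻¹ else 0 := by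
  classical
  have hcardfin : Fintype.card (Fin n) = n := Fintype.card_fin n
  have hfib : ∀ S S' : Finset (Fin n),
      ((Finset.univ.filter (fun π : Equiv.Perm (Fin n) => S.image π = S')).card : ℂ) =
      if S.card = S'.card then
        ((Nat.factorial S.card * Nat.factorial (n - S.card) : ℕ) : ℂ) else 0 := by
    intro S S'
    rw [perm_fiber_card, hcardfin]
    split_ifs <;> simp
  -- the master double sum
  set X : ℂ := ∑ π : Equiv.Perm (Fin n), ∑ S ∈ (Finset.univ : Finset (Fin n)).powerset,
      cf w₁ w₂ S T * starRingEnd ℂ (cf w₁ w₂ (S.image π) T') with hX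
  -- Way 2 : X is the number of permutations sending T to T'
  have way2 : X = if T.card = T'.card then
      ((Nat.factorial T.card * Nat.factorial (n - T.card) : ℕ) : ℂ) else 0 := by
    rw [hX]
    rw [Finset.sum_congr rfl (fun π _ => orth_single hw π T T')]
    rw [Finset.sum_boole, hfib]
  -- Way 1 : X equals the weighted sum of the e-coefficients
  have inner1 : ∀ S : Finset (Fin n),
      (∑ π : Equiv.Perm (Fin n), starRingEnd ℂ (cf w₁ w₂ (S.image π) T')) =
      ∑ S' ∈ (Finset.univ : Finset (Fin n)).powerset,
        ((Finset.univ.filter (fun π : Equiv.Perm (Fin n) => S.image π = S')).card : ℂ) *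
          starRingEnd ℂ (cf w₁ w₂ S' T') := by
    intro S
    rw [← Finset.sum_fiberwise_of_maps_to (g := fun π : Equiv.Perm (Fin n) => S.image π)
      (t := (Finset.univ : Finset (Fin n)).powerset)
      (fun π _ => by simp) (fun π => starRingEnd ℂ (cf w₁ w₂ (S.image π) T'))]
    apply Finset.sum_congr rfl
    intro S' _
    rw [Finset.sum_congr rfl (fun π hπ => by
      rw [(Finset.mem_filter.1 hπ).2]), Finset.sum_const, nsmul_eq_mul]
  have way1 : X = ∑ S ∈ (Finset.univ : Finset (Fin n)).powerset,
      ∑ S' ∈ (Finset.univ : Finset (Fin n)).powerset,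
        (if S.card = S'.card then
          ((Nat.factorial S.card * Nat.factorial (n - S.card) : ℕ) : ℂ) else 0) *
          (cf w₁ w₂ S T * starRingEnd ℂ (cf w₁ w₂ S' T')) := by
    rw [hX, Finset.sum_comm]
    apply Finset.sum_congr rfl
    intro S _
    rw [← Finset.mul_sum, inner1 S, Finset.mul_sum]
    apply Finset.sum_congr rfl
    intro S' _
    rw [hfib]
    ring
  -- regroup way1 by cardinalities
  have hcardu : (Finset.univ : Finset (Fin n)).card = n := by simp
  have way1' : X = ∑ k ∈ Finset.range (n + 1),
      ((Nat.factorial k * Nat.factorial (n - k) : ℕ) : ℂ) *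
        (eC w₁ w₂ k T * starRingEnd ℂ (eC w₁ w₂ k T')) := by
    rw [way1, Finset.sum_powerset, hcardu]
    apply Finset.sum_congr rfl
    intro k hk
    rw [Finset.sum_congr rfl (fun S hS => by
      rw [Finset.sum_powerset, hcardu])]
    have hSk : ∀ S ∈ Finset.powersetCard k (Finset.univ : Finset (Fin n)), S.card = k :=
      fun S hS => Finset.mem_powersetCard_univ.1 hS
    calc ∑ S ∈ Finset.powersetCard k Finset.univ, ∑ k' ∈ Finset.range (n+1),
          ∑ S' ∈ Finset.powersetCard k' Finset.univ,
            (if S.card = S'.card then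
              ((Nat.factorial S.card * Nat.factorial (n - S.card) : ℕ) : ℂ) else 0) *
            (cf w₁ w₂ S T * starRingEnd ℂ (cf w₁ w₂ S' T'))
        = ∑ S ∈ Finset.powersetCard k Finset.univ, ∑ k' ∈ Finset.range (n+1),
          ∑ S' ∈ Finset.powersetCard k' Finset.univ,
            (if k = k' then ((Nat.factorial k * Nat.factorial (n - k) : ℕ) : ℂ) else 0) *
            (cf w₁ w₂ S T * starRingEnd ℂ (cf w₁ w₂ S' T')) := by
          apply Finset.sum_congr rfl; intro S hS
          apply Finset.sum_congr rfl; intro k' _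
          apply Finset.sum_congr rfl; intro S' hS'
          rw [hSk S hS, Finset.mem_powersetCard_univ.1 hS']
      _ = ∑ S ∈ Finset.powersetCard k Finset.univ, ∑ S' ∈ Finset.powersetCard k Finset.univ,
            ((Nat.factorial k * Nat.factorial (n - k) : ℕ) : ℂ) *
            (cf w₁ w₂ S T * starRingEnd ℂ (cf w₁ w₂ S' T')) := by
          apply Finset.sum_congr rfl
          intro S hS
          rw [Finset.sum_eq_single_of_mem k hk ?_]
          · apply Finset.sum_congr rfl
            intro S' _
            rw [if_pos rfl]
          · intro k' _ hk'
            apply Finset.sum_eq_zero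
            intro S' _
            rw [if_neg (fun h => hk' h.symm), zero_mul]
      _ = ((Nat.factorial k * Nat.factorial (n - k) : ℕ) : ℂ) *
            (eC w₁ w₂ k T * starRingEnd ℂ (eC w₁ w₂ k T')) := by
          unfold eC
          rw [map_sum, Finset.sum_mul_sum, Finset.mul_sum]
          apply Finset.sum_congr rfl
          intro S _
          rw [Finset.mul_sum]
  -- now compare with the claimed identity
  have hfacn : ((Nat.factorial n : ℕ) : ℂ) ≠ 0 := by
    exact_mod_cast Nat.cast_ne_zero.2 (Nat.factorial_ne_zero n)
  have hch : ∀ k, k ≤ n → ((n.choose k : ℂ))⁻¹ =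
      ((Nat.factorial k * Nat.factorial (n - k) : ℕ) : ℂ) / ((Nat.factorial n : ℕ) : ℂ) := by
    intro k hk
    have h1 : (n.choose k) * (Nat.factorial k * Nat.factorial (n - k)) = Nat.factorial n := by
      rw [← mul_assoc]; exact Nat.choose_mul_factorial_mul_factorial hk
    have h2 : ((n.choose k : ℕ) : ℂ) * ((Nat.factorial k * Nat.factorial (n - k) : ℕ) : ℂ)
        = ((Nat.factorial n : ℕ) : ℂ) := by exact_mod_cast congrArg (Nat.cast : ℕ → ℂ) h1
    have hc0 : ((n.choose k : ℕ) : ℂ) ≠ 0 :=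
      Nat.cast_ne_zero.2 (Nat.choose_pos hk).ne'
    rw [eq_div_iff hfacn, ← h2, inv_mul_cancel_left₀ hc0]
  have hTn : T.card ≤ n := by
    have := Finset.card_le_univ T; rwa [hcardfin] at this
  calc ∑ k ∈ Finset.range (n + 1),
        ((n.choose k : ℂ))⁻¹ * (eC w₁ w₂ k T * starRingEnd ℂ (eC w₁ w₂ k T'))
      = ((Nat.factorial n : ℕ) : ℂ)⁻¹ * X := by
        rw [way1', Finset.mul_sum]
        apply Finset.sum_congr rfl
        intro k hk
        rw [hch k (Nat.lt_succ_iff.1 (Finset.mem_range.1 hk))]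
        ring
    _ = if T.card = T'.card then ((n.choose T.card : ℂ))⁻¹ else 0 := by
        rw [way2]
        split_ifs with h
        · rw [hch T.card hTn]; ring
        · ring


end Scalar

section AlgebraSide

variable {n : ℕ} {w₁ w₂ : ℂ}

/-- Expansion of `f` applied to a basic symmetrized product. -/
lemma fP_expand (z : Fin 4 → A) (f : A ≃⋆ₐ[ℂ] A) (m : Fin n → Fin 4)
    (hψ1 : ∀ i, f (psi1 z i) = w₁ • psi1 z i + (-(starRingEnd ℂ w₂)) • psi2 z i)
    (hψ2 : ∀ i, f (psi2 z i) = w₂ • psi1 z i + (starRingEnd ℂ w₁) • psi2 z i)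
    (S : Finset (Fin n)) :
    f (((List.finRange n).map fun j => if j ∈ S then psi2 z (m j) else psi1 z (m j)).prod)
      = ∑ T ∈ (Finset.univ : Finset (Fin n)).powerset, cf w₁ w₂ S T •
          ((List.finRange n).map fun j => if j ∈ T then psi2 z (m j) else psi1 z (m j)).prod := by
  rw [map_list_prod, List.map_map]
  have hfactor : ∀ j ∈ List.finRange n,
      (⇑f ∘ fun j => if j ∈ S then psi2 z (m j) else psi1 z (m j)) j
      = (fun j => (if j ∈ S then w₂ else w₁) • psi1 z (m j)) j +
        (fun j => (if j ∈ S then starRingEnd ℂ w₁ else -(starRingEnd ℂ w₂)) • psi2 z (m j)) j := by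
    intro j _
    by_cases hj : j ∈ S <;> simp [hj, hψ1 (m j), hψ2 (m j)]
  rw [List.map_congr_left hfactor,
    list_prod_add _ (List.nodup_finRange n) _ _, List.toFinset_finRange]
  apply Finset.sum_congr rfl
  intro T _
  have hfac2 : ∀ j ∈ List.finRange n,
      (if j ∈ T then (if j ∈ S then starRingEnd ℂ w₁ else -(starRingEnd ℂ w₂)) • psi2 z (m j)
        else (if j ∈ S then w₂ else w₁) • psi1 z (m j))
      = (fun j => (if j ∈ T then (if j ∈ S then starRingEnd ℂ w₁ else -(starRingEnd ℂ w₂))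
            else (if j ∈ S then w₂ else w₁)) •
          (if j ∈ T then psi2 z (m j) else psi1 z (m j))) j := by
    intro j _
    by_cases hj : j ∈ T <;> simp [hj]
  rw [List.map_congr_left hfac2, list_prod_smul]
  unfold cf
  rw [Fin.prod_univ_def]

/-- Regrouping a sum over pairs of subsets by cardinality. -/
lemma regroup {M : Type*} [AddCommMonoid M] [Module ℂ M]
    (X : Finset (Fin n) → Finset (Fin n) → M) :
    ∑ k ∈ Finset.range (n + 1), ((n.choose k : ℂ))⁻¹ •
        ∑ T ∈ Finset.powersetCard k (Finset.univ : Finset (Fin n)),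
          ∑ T' ∈ Finset.powersetCard k (Finset.univ : Finset (Fin n)), X T T'
    = ∑ T ∈ (Finset.univ : Finset (Fin n)).powerset,
        ∑ T' ∈ (Finset.univ : Finset (Fin n)).powerset,
          (if T.card = T'.card then ((n.choose T.card : ℂ))⁻¹ else 0) • X T T' := by
  have hcardu : (Finset.univ : Finset (Fin n)).card = n := by simp
  symm
  rw [Finset.sum_powerset, hcardu]
  apply Finset.sum_congr rfl
  intro k hk
  rw [Finset.sum_congr rfl (fun T hT => by rw [Finset.sum_powerset, hcardu])]
  calc ∑ T ∈ Finset.powersetCard k Finset.univ, ∑ k' ∈ Finset.range (n + 1),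
        ∑ T' ∈ Finset.powersetCard k' Finset.univ,
          (if T.card = T'.card then ((n.choose T.card : ℂ))⁻¹ else 0) • X T T'
      = ∑ T ∈ Finset.powersetCard k Finset.univ, ∑ k' ∈ Finset.range (n + 1),
        ∑ T' ∈ Finset.powersetCard k' Finset.univ,
          (if k = k' then ((n.choose k : ℂ))⁻¹ else 0) • X T T' := by
        apply Finset.sum_congr rfl; intro T hT
        apply Finset.sum_congr rfl; intro k' _
        apply Finset.sum_congr rfl; intro T' hT'
        rw [Finset.mem_powersetCard_univ.1 hT, Finset.mem_powersetCard_univ.1 hT']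
    _ = ∑ T ∈ Finset.powersetCard k Finset.univ, ∑ T' ∈ Finset.powersetCard k Finset.univ,
          ((n.choose k : ℂ))⁻¹ • X T T' := by
        apply Finset.sum_congr rfl; intro T hT
        rw [Finset.sum_eq_single_of_mem k hk ?_]
        · apply Finset.sum_congr rfl; intro T' _; rw [if_pos rfl]
        · intro k' _ hk'
          apply Finset.sum_eq_zero
          intro T' _
          rw [if_neg (fun h => hk' h.symm), zero_smul]
    _ = ((n.choose k : ℂ))⁻¹ • ∑ T ∈ Finset.powersetCard k Finset.univ,
          ∑ T' ∈ Finset.powersetCard k Finset.univ, X T T' := by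
        rw [Finset.smul_sum]
        apply Finset.sum_congr rfl
        intro T _
        rw [Finset.smul_sum]

end AlgebraSide

/-- Every entry of p_(n) is invariant under the SU(2)-action α_w, i.e. lies in
the fixed-point subalgebra A(S^4_θ) = Inv_{SU(2)}(A(S^7_{θ'})). -/
theorem stmt11 (μ : ℂ) (z : Fin 4 → A) (hrel : S7Rel μ z) (n : ℕ) (hn : 0 < n)
    (w₁ w₂ : ℂ) (hw : Complex.normSq w₁ + Complex.normSq w₂ = 1)
    (f : A ≃⋆ₐ[ℂ] A)
    (hf0 : f (z 0) = w₁ • z 0 - (starRingEnd ℂ w₂) • z 1)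
    (hf1 : f (z 1) = w₂ • z 0 + (starRingEnd ℂ w₁) • z 1)
    (hf2 : f (z 2) = w₁ • z 2 - (starRingEnd ℂ w₂) • z 3)
    (hf3 : f (z 3) = w₂ • z 2 + (starRingEnd ℂ w₁) • z 3) :
    ∀ m m' : Fin n → Fin 4, f (projPn z n m m') = projPn z n m m' := by
  classical
  have hψ : (∀ i, f (psi1 z i) = w₁ • psi1 z i + (-(starRingEnd ℂ w₂)) • psi2 z i) ∧
      (∀ i, f (psi2 z i) = w₂ • psi1 z i + (starRingEnd ℂ w₁) • psi2 z i) := by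
    constructor <;> intro i <;> fin_cases i <;>
      simp [psi1, psi2, hf0, hf1, hf2, hf3, map_star, star_smul, star_add, star_sub,
        smul_neg, neg_smul, sub_eq_add_neg, Complex.star_def, Complex.conj_conj] <;>
      module
  obtain ⟨hψ1, hψ2⟩ := hψ
  intro m m'
  -- abbreviations
  set P : (Fin n → Fin 4) → Finset (Fin n) → A := fun mm S =>
    ((List.finRange n).map fun j => if j ∈ S then psi2 z (mm j) else psi1 z (mm j)).prod with hPdef
  set Q : ℕ → (Fin n → Fin 4) → A := fun k mm =>
    ∑ S ∈ Finset.powersetCard k (Finset.univ : Finset (Fin n)), P mm S with hQdef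
  -- transformation of the symmetrized sums
  have hfQ : ∀ (k : ℕ) (mm : Fin n → Fin 4),
      f (Q k mm) = ∑ T ∈ (Finset.univ : Finset (Fin n)).powerset, eC w₁ w₂ k T • P mm T := by
    intro k mm
    rw [hQdef]
    simp only
    rw [map_sum]
    rw [Finset.sum_congr rfl (fun S _ => fP_expand z f mm hψ1 hψ2 S), Finset.sum_comm]
    apply Finset.sum_congr rfl
    intro T _
    rw [eC, Finset.sum_smul]
  -- the entries in terms of the unnormalized sums
  have hentry : ∀ k : Fin (n + 1), ∀ mm mm' : Fin n → Fin 4,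
      phiVec z n k mm * star (phiVec z n k mm') =
        ((n.choose (k : ℕ) : ℂ))⁻¹ • (Q (k : ℕ) mm * star (Q (k : ℕ) mm')) := by
    intro k mm mm'
    have hk : (k : ℕ) ≤ n := Nat.lt_succ_iff.1 k.2
    rw [phiVec, phiVec]
    rw [star_smul]
    rw [smul_mul_smul_comm]
    have hr : star (((Real.sqrt (n.choose (k : ℕ)))⁻¹ : ℝ) : ℂ) =
        (((Real.sqrt (n.choose (k : ℕ)))⁻¹ : ℝ) : ℂ) := by
      rw [Complex.star_def, Complex.conj_ofReal]
    rw [hr]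
    have hrr : (((Real.sqrt (n.choose (k : ℕ)))⁻¹ : ℝ) : ℂ) *
        (((Real.sqrt (n.choose (k : ℕ)))⁻¹ : ℝ) : ℂ) = ((n.choose (k : ℕ) : ℂ))⁻¹ := by
      rw [← Complex.ofReal_mul, ← mul_inv,
        Real.mul_self_sqrt (Nat.cast_nonneg _),
        Complex.ofReal_inv, Complex.ofReal_natCast]
    rw [hrr]
  -- the common normal form
  have common_eq : ∀ X : Finset (Fin n) → Finset (Fin n) → A,
      (∑ k ∈ Finset.range (n + 1), ((n.choose k : ℂ))⁻¹ •
        ∑ T ∈ Finset.powersetCard k (Finset.univ : Finset (Fin n)),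
          ∑ T' ∈ Finset.powersetCard k (Finset.univ : Finset (Fin n)), X T T')
      = ∑ T ∈ (Finset.univ : Finset (Fin n)).powerset,
          ∑ T' ∈ (Finset.univ : Finset (Fin n)).powerset,
            (if T.card = T'.card then ((n.choose T.card : ℂ))⁻¹ else 0) • X T T' := regroup
  set X : Finset (Fin n) → Finset (Fin n) → A := fun T T' => P m T * star (P m' T') with hXdef
  -- left-hand side computation
  have lhs_eq : f (projPn z n m m') =
      ∑ T ∈ (Finset.univ : Finset (Fin n)).powerset,
        ∑ T' ∈ (Finset.univ : Finset (Fin n)).powerset,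
          (∑ k ∈ Finset.range (n + 1),
            ((n.choose k : ℂ))⁻¹ * (eC w₁ w₂ k T * starRingEnd ℂ (eC w₁ w₂ k T'))) • X T T' := by
    rw [projPn, map_sum]
    rw [Finset.sum_congr rfl (fun k _ => congrArg f (hentry k m m'))]
    have step : ∀ k : Fin (n + 1),
        f (((n.choose (k : ℕ) : ℂ))⁻¹ • (Q (k : ℕ) m * star (Q (k : ℕ) m'))) =
        ∑ T ∈ (Finset.univ : Finset (Fin n)).powerset,
          ∑ T' ∈ (Finset.univ : Finset (Fin n)).powerset,
            (((n.choose (k : ℕ) : ℂ))⁻¹ *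
              (eC w₁ w₂ (k : ℕ) T * starRingEnd ℂ (eC w₁ w₂ (k : ℕ) T'))) • X T T' := by
      intro k
      rw [map_smul, map_mul, map_star, hfQ, hfQ]
      rw [star_sum]
      rw [Finset.sum_congr rfl (fun T' _ => star_smul (eC w₁ w₂ (k : ℕ) T') (P m' T'))]
      rw [Finset.sum_mul_sum]
      rw [Finset.smul_sum]
      apply Finset.sum_congr rfl
      intro T _
      rw [Finset.smul_sum]
      apply Finset.sum_congr rfl
      intro T' _
      rw [smul_mul_smul_comm, smul_smul]
      rfl
    rw [Finset.sum_congr rfl (fun k _ => step k)]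
    rw [Fin.sum_univ_eq_sum_range (fun k => ∑ T ∈ (Finset.univ : Finset (Fin n)).powerset,
      ∑ T' ∈ (Finset.univ : Finset (Fin n)).powerset,
        (((n.choose k : ℂ))⁻¹ * (eC w₁ w₂ k T * starRingEnd ℂ (eC w₁ w₂ k T'))) • X T T') (n + 1)]
    rw [Finset.sum_comm]
    apply Finset.sum_congr rfl
    intro T _
    rw [Finset.sum_comm]
    apply Finset.sum_congr rfl
    intro T' _
    rw [Finset.sum_smul]
  -- right-hand side computation
  have rhs_eq : projPn z n m m' =
      ∑ T ∈ (Finset.univ : Finset (Fin n)).powerset,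
        ∑ T' ∈ (Finset.univ : Finset (Fin n)).powerset,
          (if T.card = T'.card then ((n.choose T.card : ℂ))⁻¹ else 0) • X T T' := by
    rw [projPn]
    rw [Finset.sum_congr rfl (fun k _ => hentry k m m')]
    rw [← common_eq X]
    rw [Fin.sum_univ_eq_sum_range (fun k =>
      ((n.choose k : ℂ))⁻¹ • (Q k m * star (Q k m'))) (n + 1)]
    apply Finset.sum_congr rfl
    intro k _
    congr 1
    rw [hQdef]
    simp only
    rw [star_sum, Finset.sum_mul_sum]
  rw [lhs_eq, rhs_eq]
  apply Finset.sum_congr rfl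
  intro T _
  apply Finset.sum_congr rfl
  intro T' _
  rw [key_identity hw T T']
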